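/- In the category of matrices over nonnegative reals, if a matrix p : X → Y is pure — meaning p ⊗ id_A has the right lifting property against (mix) ⊗ id_B for all objects A, B, where mix denotes any all-ones column vector — then p has at most one nonzero entry in each column. -/

import Mathlib

open scoped NNReal

/-- Kronecker product of matrices of nonnegative reals. -/
def kron {a b c d : Type} (A : Matrix a b ℝ≥0) (B : Matrix c d ℝ≥0) :
    Matrix (a × c) (b × d) ℝ≥0 :=
  fun x y => A x.1 y.1 * B x.2 y.2

/-- The completely mixed state on `S`: the all-ones column vector. -/
def mix (S : Type) : Matrix S Unit ℝ≥0 := fun _ _ => 1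

/-- If a matrix `p` of nonnegative reals is pure — `p ⊗ id_A` has the right lifting
property against `mix_S ⊗ id_B` for all `A`, `B`, `S` — then `p` has at most one
nonzero entry in each column. -/
theorem stoch_pure_implies_column {X Y : Type} [Fintype X] [Fintype Y] [DecidableEq X]
    (p : Matrix Y X ℝ≥0)
    (hpure : ∀ (A B S : Type) [Fintype A] [DecidableEq A] [Fintype B] [DecidableEq B]
      [Fintype S],
      ∀ (u : Matrix (X × A) (Unit × B) ℝ≥0) (v : Matrix (Y × A) (S × B) ℝ≥0),
        kron p (1 : Matrix A A ℝ≥0) * u = v * kron (mix S) (1 : Matrix B B ℝ≥0) →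
          ∃ h : Matrix (X × A) (S × B) ℝ≥0,
            h * kron (mix S) (1 : Matrix B B ℝ≥0) = u ∧
            kron p (1 : Matrix A A ℝ≥0) * h = v) :
    ∀ (x : X) (y y' : Y), p y x ≠ 0 → p y' x ≠ 0 → y = y' := by
  classical
  intro x y y' hy hy'
  by_contra hne
  obtain ⟨h, hu, hv⟩ := hpure Unit Unit Y
    (Matrix.of fun _ _ => 1)
    (Matrix.of fun yu su => if su.1 = yu.1 then ∑ z, p yu.1 z else 0)
    (by
      funext ⟨a, _⟩ ⟨s, b⟩
      simp [Matrix.mul_apply, kron, mix, Fintype.sum_prod_type, Finset.sum_ite_eq, Matrix.of_apply])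
  -- row sums of h are 1
  have hrow : ∀ z : X, ∑ s : Y, h (z, ()) (s, ()) = 1 := by
    intro z
    have := congrFun (congrFun hu (z, ())) ((), ())
    simpa [Matrix.mul_apply, kron, mix, Fintype.sum_prod_type] using this
  have hcol : ∀ (y0 s : Y), s ≠ y0 → ∀ z : X, p y0 z = 0 ∨ h (z, ()) (s, ()) = 0 := by
    intro y0 s hs z
    have := congrFun (congrFun hv (y0, ())) (s, ())
    simp [Matrix.mul_apply, kron, Fintype.sum_prod_type, if_neg hs] at this
    exact this z
  have hz : ∀ s : Y, h (x, ()) (s, ()) = 0 := by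
    intro s
    rcases ne_or_eq s y with hsy | rfl
    · rcases hcol y s hsy x with h0 | h0
      · exact absurd h0 hy
      · exact h0
    · rcases hcol y' s hne x with h0 | h0
      · exact absurd h0 hy'
      · exact h0
  have := hrow x
  simp [hz] at this
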